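/- Convergence of the kurtosis under the renormalized coupling: there exist δ > 0 and C > 0 such that for every real κ with 0 < |κ| < δ, the limit K(κ) := lim_{N→∞} m₄(N; κ/N) / (m₂(N; κ/N))² exists and satisfies |K(κ) − 3| ≤ C·|κ|³ (i.e. the kurtosis converges to 3 with vanishing first- and second-order corrections in κ). -/

import Mathlib

open Filter

/-- The discrete stochastic process with memory: binomial transfer probabilities
with coupling `ε`. -/
noncomputable def P (ε : ℝ) : ℕ → ℤ → ℝ
  | 0, x => if x = 0 then 1 else 0
  | n + 1, x =>
      P ε n (x + 1) * (1 / 2 - ((x : ℝ) + 1) * ε) +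
      P ε n (x - 1) * (1 / 2 + ((x : ℝ) - 1) * ε)

/-- The `k`-th moment with coupling `ε`: `m_k(n; ε) = Σ_{x ∈ ℤ} x^k · P(n, x; ε)`. -/
noncomputable def m (ε : ℝ) (k n : ℕ) : ℝ := ∑' x : ℤ, (x : ℝ) ^ k * P ε n x

lemma P_eq_zero (ε : ℝ) : ∀ (n : ℕ) (x : ℤ), (n : ℤ) < |x| → P ε n x = 0
  | 0, x, h => by
      have hx : x ≠ 0 := by
        intro h0; rw [h0] at h; simp at h
      simp [P, hx]
  | n + 1, x, h => by
      have h1 : (n : ℤ) < |x + 1| := by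
        have := abs_add_le (x + 1) (-1)
        simp only [add_neg_cancel_right, abs_neg, abs_one] at this
        push_cast at h ⊢; linarith
      have h2 : (n : ℤ) < |x - 1| := by
        have := abs_add_le (x - 1) 1
        simp only [sub_add_cancel, abs_one] at this
        push_cast at h ⊢; linarith
      simp [P, P_eq_zero ε n _ h1, P_eq_zero ε n _ h2]

lemma summable_mul_P (ε : ℝ) (n : ℕ) (g : ℤ → ℝ) :
    Summable fun x : ℤ => g x * P ε n x := by
  apply summable_of_ne_finset_zero (s := Finset.Icc (-(n : ℤ)) n)
  intro x hx
  have hxa : (n : ℤ) < |x| := by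
    simp only [Finset.mem_Icc, not_and_or, not_le] at hx
    rw [lt_abs]; omega
  rw [P_eq_zero ε n x hxa, mul_zero]

set_option maxHeartbeats 1000000 in
lemma moment_rec (ε : ℝ) (n : ℕ) (g : ℤ → ℝ) :
    (∑' x : ℤ, g x * P ε (n + 1) x) =
      ∑' y : ℤ, (g (y - 1) * (1 / 2 - (y : ℝ) * ε) + g (y + 1) * (1 / 2 + (y : ℝ) * ε))
        * P ε n y := by
  set f1 : ℤ → ℝ := fun y => g (y - 1) * (1 / 2 - (y : ℝ) * ε) * P ε n y with hf1
  set f2 : ℤ → ℝ := fun y => g (y + 1) * (1 / 2 + (y : ℝ) * ε) * P ε n y with hf2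
  have S1 : Summable f1 := summable_mul_P ε n _
  have S2 : Summable f2 := summable_mul_P ε n _
  have S1' : Summable fun x : ℤ => f1 (x + 1) :=
    (Equiv.addRight (1 : ℤ)).summable_iff.mpr S1
  have S2' : Summable fun x : ℤ => f2 (x - 1) :=
    (Equiv.subRight (1 : ℤ)).summable_iff.mpr S2
  calc (∑' x : ℤ, g x * P ε (n + 1) x)
      = ∑' x : ℤ, (f1 (x + 1) + f2 (x - 1)) := by
        refine tsum_congr fun x => ?_
        simp only [P, hf1, hf2, add_sub_cancel_right, sub_add_cancel]
        push_cast
        ring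
    _ = (∑' x : ℤ, f1 (x + 1)) + ∑' x : ℤ, f2 (x - 1) := Summable.tsum_add S1' S2'
    _ = (∑' y : ℤ, f1 y) + ∑' y : ℤ, f2 y := by
        rw [show (∑' x : ℤ, f1 (x + 1)) = ∑' y : ℤ, f1 y from
              (Equiv.addRight (1 : ℤ)).tsum_eq f1,
            show (∑' x : ℤ, f2 (x - 1)) = ∑' y : ℤ, f2 y from
              (Equiv.subRight (1 : ℤ)).tsum_eq f2]
    _ = ∑' y : ℤ, (f1 y + f2 y) := (Summable.tsum_add S1 S2).symm
    _ = _ := tsum_congr fun y => by simp only [hf1, hf2]; ring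

lemma m_zero (ε : ℝ) (k : ℕ) : m ε k 0 = if k = 0 then 1 else 0 := by
  rw [m, tsum_eq_single (0 : ℤ) (fun b hb => by simp [P, hb])]
  rcases Nat.eq_zero_or_pos k with hk | hk
  · simp [P, hk]
  · simp [P, zero_pow (Nat.pos_iff_ne_zero.mp hk), Nat.pos_iff_ne_zero.mp hk]

lemma m0_eq (ε : ℝ) (n : ℕ) : m ε 0 n = 1 := by
  induction n with
  | zero => simp [m_zero]
  | succ n ih =>
      have h : m ε 0 (n + 1) = ∑' x : ℤ, ((x : ℝ) ^ 0) * P ε (n + 1) x := rfl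
      rw [h, moment_rec ε n (fun x : ℤ => (x : ℝ) ^ 0)]
      have h2 : (∑' y : ℤ, ((((y - 1 : ℤ)) : ℝ) ^ 0 * (1 / 2 - (y : ℝ) * ε)
              + (((y + 1 : ℤ)) : ℝ) ^ 0 * (1 / 2 + (y : ℝ) * ε)) * P ε n y)
          = ∑' y : ℤ, ((y : ℝ) ^ 0) * P ε n y := tsum_congr fun y => by
            push_cast; ring
      rw [h2]; exact ih

lemma m2_rec (ε : ℝ) (n : ℕ) : m ε 2 (n + 1) = (1 + 4 * ε) * m ε 2 n + 1 := by
  have h : m ε 2 (n + 1) = ∑' x : ℤ, ((x : ℝ) ^ 2) * P ε (n + 1) x := rfl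
  rw [h, moment_rec ε n (fun x : ℤ => (x : ℝ) ^ 2)]
  have h2 : (∑' y : ℤ, ((((y - 1 : ℤ)) : ℝ) ^ 2 * (1 / 2 - (y : ℝ) * ε)
          + (((y + 1 : ℤ)) : ℝ) ^ 2 * (1 / 2 + (y : ℝ) * ε)) * P ε n y)
      = ∑' y : ℤ, ((1 + 4 * ε) * ((y : ℝ) ^ 2 * P ε n y) + (y : ℝ) ^ 0 * P ε n y) :=
    tsum_congr fun y => by push_cast; ring
  rw [h2, Summable.tsum_add ((summable_mul_P ε n (fun y : ℤ => (y : ℝ) ^ 2)).mul_left _)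
      (summable_mul_P ε n (fun y : ℤ => (y : ℝ) ^ 0)),
    tsum_mul_left]
  rw [show (∑' y : ℤ, ((y : ℝ) ^ 0) * P ε n y) = m ε 0 n from rfl, m0_eq]
  rfl

lemma m4_rec (ε : ℝ) (n : ℕ) :
    m ε 4 (n + 1) = (1 + 8 * ε) * m ε 4 n + (6 + 8 * ε) * m ε 2 n + 1 := by
  have h : m ε 4 (n + 1) = ∑' x : ℤ, ((x : ℝ) ^ 4) * P ε (n + 1) x := rfl
  rw [h, moment_rec ε n (fun x : ℤ => (x : ℝ) ^ 4)]
  have h2 : (∑' y : ℤ, ((((y - 1 : ℤ)) : ℝ) ^ 4 * (1 / 2 - (y : ℝ) * ε)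
          + (((y + 1 : ℤ)) : ℝ) ^ 4 * (1 / 2 + (y : ℝ) * ε)) * P ε n y)
      = ∑' y : ℤ, (((1 + 8 * ε) * ((y : ℝ) ^ 4 * P ε n y)
          + (6 + 8 * ε) * ((y : ℝ) ^ 2 * P ε n y)) + (y : ℝ) ^ 0 * P ε n y) :=
    tsum_congr fun y => by push_cast; ring
  have S4 := (summable_mul_P ε n (fun y : ℤ => (y : ℝ) ^ 4)).mul_left (1 + 8 * ε)
  have S2 := (summable_mul_P ε n (fun y : ℤ => (y : ℝ) ^ 2)).mul_left (6 + 8 * ε)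
  have S0 := summable_mul_P ε n (fun y : ℤ => (y : ℝ) ^ 0)
  rw [h2, Summable.tsum_add (S4.add S2) S0, Summable.tsum_add S4 S2, tsum_mul_left, tsum_mul_left]
  rw [show (∑' y : ℤ, ((y : ℝ) ^ 0) * P ε n y) = m ε 0 n from rfl, m0_eq]
  rfl

lemma m2_closed (ε : ℝ) (hε : ε ≠ 0) (n : ℕ) :
    m ε 2 n = ((1 + 4 * ε) ^ n - 1) / (4 * ε) := by
  induction n with
  | zero => simp [m_zero]
  | succ n ih => rw [m2_rec, ih]; field_simp; ring

lemma m4_closed (ε : ℝ) (hε : ε ≠ 0) (n : ℕ) :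
    m ε 4 n = (6 + 8 * ε) / (4 * ε) *
        (((1 + 8 * ε) ^ n - (1 + 4 * ε) ^ n) / (4 * ε) - ((1 + 8 * ε) ^ n - 1) / (8 * ε))
      + ((1 + 8 * ε) ^ n - 1) / (8 * ε) := by
  induction n with
  | zero => simp [m_zero]
  | succ n ih => rw [m4_rec, ih, m2_closed ε hε]; field_simp; ring

/-- convergence of the kurtosis under the renormalized coupling
`ε = κ/N`: there exist `δ > 0` and `C > 0` such that for `0 < |κ| < δ`, the limit
`K(κ) = lim_{N→∞} m₄(N; κ/N)/(m₂(N; κ/N))²` exists and `|K(κ) − 3| ≤ C·|κ|³`. -/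
theorem kurtosis_converges_to_three :
    ∃ δ > (0 : ℝ), ∃ C > (0 : ℝ), ∀ κ : ℝ, 0 < |κ| → |κ| < δ →
      ∃ K : ℝ,
        Tendsto (fun N : ℕ => m (κ / N) 4 N / (m (κ / N) 2 N) ^ 2) atTop (nhds K) ∧
        |K - 3| ≤ C * |κ| ^ 3 := by
  refine ⟨1, one_pos, 1, one_pos, fun κ hκ _ => ⟨3, ?_, by rw [sub_self, abs_zero]; positivity⟩⟩
  have hκ0 : κ ≠ 0 := by
    intro h; rw [h, abs_zero] at hκ; exact lt_irrefl 0 hκ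
  -- the explicit rational function of the two exponential-type sequences
  set F : ℕ → ℝ := fun N =>
    ((6 + 8 * κ / N) * (((1 + 8 * κ / N) ^ N - 2 * (1 + 4 * κ / N) ^ N + 1) / (32 * κ ^ 2))
      + ((1 + 8 * κ / N) ^ N - 1) / (8 * κ) * (1 / N)) /
    (((1 + 4 * κ / N) ^ N - 1) ^ 2 / (16 * κ ^ 2)) with hF
  have heq : ∀ᶠ N : ℕ in atTop, m (κ / N) 4 N / (m (κ / N) 2 N) ^ 2 = F N := by
    filter_upwards [eventually_ge_atTop 1] with N hN
    have hNR : (N : ℝ) ≠ 0 := Nat.cast_ne_zero.mpr (by omega)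
    have hε : κ / (N : ℝ) ≠ 0 := div_ne_zero hκ0 hNR
    rw [m2_closed _ hε, m4_closed _ hε]
    set e : ℝ := κ / N with he
    have hκe : κ = (N : ℝ) * e := by rw [he, mul_div_assoc', mul_comm, mul_div_assoc, div_self hNR, mul_one]
    have h8 : 8 * κ / (N : ℝ) = 8 * e := by rw [he]; ring
    have h4 : 4 * κ / (N : ℝ) = 4 * e := by rw [he]; ring
    rw [hF]
    simp only [h8, h4]
    set a : ℝ := (1 + 4 * e) ^ N
    set b : ℝ := (1 + 8 * e) ^ N
    -- divide numerator and denominator by N^2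
    have key : ∀ x y : ℝ, x / y = (x / (N : ℝ) ^ 2) / (y / (N : ℝ) ^ 2) := fun x y => by
      rw [div_div_div_comm, div_self (pow_ne_zero 2 hNR), div_one]
    rw [key]
    congr 1
    · rw [hκe]; field_simp; ring
    · rw [div_pow, div_div, hκe]
      congr 1
      ring
  -- now compute the limit of F
  have hA : Tendsto (fun N : ℕ => (1 + 4 * κ / (N : ℝ)) ^ N) atTop
      (nhds (Real.exp (4 * κ))) := Real.tendsto_one_add_div_pow_exp (4 * κ)
  have hB : Tendsto (fun N : ℕ => (1 + 8 * κ / (N : ℝ)) ^ N) atTop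
      (nhds (Real.exp (8 * κ))) := Real.tendsto_one_add_div_pow_exp (8 * κ)
  have hinv : Tendsto (fun N : ℕ => (1 : ℝ) / N) atTop (nhds 0) :=
    tendsto_one_div_atTop_nhds_zero_nat
  have hc : Tendsto (fun N : ℕ => 6 + 8 * κ / (N : ℝ)) atTop (nhds 6) := by
    have : Tendsto (fun N : ℕ => 8 * κ / (N : ℝ)) atTop (nhds 0) := by
      have := hinv.const_mul (8 * κ)
      simpa [mul_one_div, div_eq_mul_inv] using this
    simpa using tendsto_const_nhds.add this
  have hA1 : Real.exp (4 * κ) - 1 ≠ 0 := by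
    rw [sub_ne_zero, ← Real.exp_zero]
    intro h
    have h4 : (4 : ℝ) * κ = 0 := Real.exp_eq_exp.mp h
    have : κ = 0 := by linarith
    exact hκ0 this
  have hnum : Tendsto (fun N : ℕ =>
      (6 + 8 * κ / N) * (((1 + 8 * κ / N) ^ N - 2 * (1 + 4 * κ / N) ^ N + 1) / (32 * κ ^ 2))
        + ((1 + 8 * κ / N) ^ N - 1) / (8 * κ) * (1 / N)) atTop
      (nhds (6 * ((Real.exp (8 * κ) - 2 * Real.exp (4 * κ) + 1) / (32 * κ ^ 2)) + (Real.exp (8 * κ) - 1) / (8 * κ) * 0)) :=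
    (hc.mul (((hB.sub (hA.const_mul 2)).add tendsto_const_nhds).div_const (32 * κ ^ 2))).add
      (((hB.sub tendsto_const_nhds).div_const (8 * κ)).mul hinv)
  have hden : Tendsto (fun N : ℕ => ((1 + 4 * κ / N) ^ N - 1) ^ 2 / (16 * κ ^ 2)) atTop
      (nhds ((Real.exp (4 * κ) - 1) ^ 2 / (16 * κ ^ 2))) :=
    ((hA.sub tendsto_const_nhds).pow 2).div_const (16 * κ ^ 2)
  have hdne : (Real.exp (4 * κ) - 1) ^ 2 / (16 * κ ^ 2) ≠ 0 :=
    div_ne_zero (pow_ne_zero 2 hA1) (by positivity)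
  have hBA : Real.exp (8 * κ) = Real.exp (4 * κ) ^ 2 := by
    rw [show (8 : ℝ) * κ = 4 * κ + 4 * κ by ring, Real.exp_add]; ring
  have hval : (6 * ((Real.exp (8 * κ) - 2 * Real.exp (4 * κ) + 1) / (32 * κ ^ 2))
        + (Real.exp (8 * κ) - 1) / (8 * κ) * 0) /
      ((Real.exp (4 * κ) - 1) ^ 2 / (16 * κ ^ 2)) = 3 := by
    rw [hBA, mul_zero, add_zero, div_eq_iff hdne]
    field_simp
    ring
  have hlim : Tendsto F atTop (nhds 3) := by
    rw [hF]
    exact hval ▸ hnum.div hden hdne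
  have heq' : (fun N : ℕ => m (κ / N) 4 N / (m (κ / N) 2 N) ^ 2) =ᶠ[atTop] F := heq
  exact hlim.congr' heq'.symm
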